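/- Let (Z_n)_{n≥0} be a Jirina process with branching mechanism F started at x ≥ 0, and let η be the largest fixed point of F. Then the extinction probability satisfies P_x(lim_n Z_n = 0) = e^{−η x}, and moreover the events {Σ_{n≥0} Z_n < ∞} and {lim_n Z_n = 0} coincide almost surely. -/

import Mathlib

open MeasureTheory ProbabilityTheory Filter

noncomputable def laplaceExpF (Λ : Measure ℝ) (c : ℝ) (l : ℝ) : ℝ :=
  (∫⁻ r in Set.Ioi (0 : ℝ), ENNReal.ofReal (1 - Real.exp (-(l * r))) ∂Λ).toReal +
    (if l = 0 then 0 else c)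

lemma one_sub_exp_nonneg {s : ℝ} (hs : 0 ≤ s) : 0 ≤ 1 - Real.exp (-s) := by
  have : Real.exp (-s) ≤ 1 := Real.exp_le_one_iff.2 (by linarith)
  linarith

lemma one_sub_exp_le_one {s : ℝ} : 1 - Real.exp (-s) ≤ 1 := by
  have := Real.exp_pos (-s); linarith

lemma one_sub_exp_le {s : ℝ} : 1 - Real.exp (-s) ≤ s := by
  have := Real.add_one_le_exp (-s); linarith

lemma one_sub_exp_le_mul_min {l r : ℝ} (hl : 0 ≤ l) (hr : 0 < r) :
    1 - Real.exp (-(l * r)) ≤ max 1 l * min 1 r := by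
  rcases le_or_gt r 1 with h | h
  · have h1 : 1 - Real.exp (-(l * r)) ≤ l * r := one_sub_exp_le
    have : l * r ≤ max 1 l * min 1 r := by
      rw [min_eq_right h]
      exact mul_le_mul_of_nonneg_right (le_max_right 1 l) hr.le
    linarith
  · have h1 : 1 - Real.exp (-(l * r)) ≤ 1 := one_sub_exp_le_one
    have : (1:ℝ) ≤ max 1 l * min 1 r := by
      rw [min_eq_left h.le, mul_one]; exact le_max_left 1 l
    linarith

section PartA2
variable {Λ : Measure ℝ} {c : ℝ}

lemma lintF_ne_top (hΛ : (∫⁻ r in Set.Ioi (0 : ℝ), ENNReal.ofReal (min 1 r) ∂Λ) ≠ ⊤)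
    {l : ℝ} (hl : 0 ≤ l) :
    (∫⁻ r in Set.Ioi (0 : ℝ), ENNReal.ofReal (1 - Real.exp (-(l * r))) ∂Λ) ≠ ⊤ := by
  have hb : (∫⁻ r in Set.Ioi (0 : ℝ), ENNReal.ofReal (1 - Real.exp (-(l * r))) ∂Λ)
      ≤ ENNReal.ofReal (max 1 l) * ∫⁻ r in Set.Ioi (0 : ℝ), ENNReal.ofReal (min 1 r) ∂Λ := by
    rw [← MeasureTheory.lintegral_const_mul' _ _ ENNReal.ofReal_ne_top]
    refine setLIntegral_mono' measurableSet_Ioi (fun r hr => ?_)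
    rw [← ENNReal.ofReal_mul (by positivity)]
    exact ENNReal.ofReal_le_ofReal (one_sub_exp_le_mul_min hl hr)
  exact ne_top_of_le_ne_top (ENNReal.mul_ne_top ENNReal.ofReal_ne_top hΛ) hb

lemma laplaceExpF_zero : laplaceExpF Λ c 0 = 0 := by
  simp [laplaceExpF]

lemma laplaceExpF_nonneg (hc : 0 ≤ c) {l : ℝ} : 0 ≤ laplaceExpF Λ c l := by
  unfold laplaceExpF
  have : (0:ℝ) ≤ if l = 0 then 0 else c := by split <;> simp [hc]
  positivity

lemma laplaceExpF_mono (hΛ : (∫⁻ r in Set.Ioi (0 : ℝ), ENNReal.ofReal (min 1 r) ∂Λ) ≠ ⊤)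
    (hc : 0 ≤ c) {a b : ℝ} (ha : 0 ≤ a) (hab : a ≤ b) :
    laplaceExpF Λ c a ≤ laplaceExpF Λ c b := by
  unfold laplaceExpF
  gcongr ?_ + ?_
  · refine ENNReal.toReal_mono (lintF_ne_top hΛ (ha.trans hab)) ?_
    refine setLIntegral_mono' measurableSet_Ioi (fun r hr => ?_)
    refine ENNReal.ofReal_le_ofReal ?_
    have : Real.exp (-(b * r)) ≤ Real.exp (-(a * r)) := by
      apply Real.exp_le_exp.2; nlinarith [(Set.mem_Ioi.1 hr).le, Set.mem_Ioi.1 hr]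
    linarith
  · rcases eq_or_ne a 0 with h | h
    · simp only [h, if_true]; split <;> simp [hc]
    · have hb : b ≠ 0 := by intro hb0; rw [hb0] at hab; exact h (le_antisymm hab ha)
      simp [h, hb]

lemma laplaceExpF_continuousAt
    (hΛ : (∫⁻ r in Set.Ioi (0 : ℝ), ENNReal.ofReal (min 1 r) ∂Λ) ≠ ⊤)
    {a : ℝ} (ha : 0 < a) : ContinuousAt (laplaceExpF Λ c) a := by
  have hI : Tendsto (fun l => ∫⁻ r in Set.Ioi (0:ℝ), ENNReal.ofReal (1 - Real.exp (-(l*r))) ∂Λ)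
      (nhds a) (nhds (∫⁻ r in Set.Ioi (0:ℝ), ENNReal.ofReal (1 - Real.exp (-(a*r))) ∂Λ)) := by
    refine tendsto_lintegral_filter_of_dominated_convergence
      (fun r => ENNReal.ofReal (max 1 (a+1)) * ENNReal.ofReal (min 1 r)) ?_ ?_ ?_ ?_
    · exact Eventually.of_forall fun l => by fun_prop
    · have hev : ∀ᶠ l in nhds a, l ∈ Set.Ioo 0 (a+1) :=
        Ioo_mem_nhds ha (by linarith)
      filter_upwards [hev] with l hl
      refine (ae_restrict_iff' measurableSet_Ioi).2 (Eventually.of_forall fun r hr => ?_)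
      rw [← ENNReal.ofReal_mul (by positivity)]
      refine ENNReal.ofReal_le_ofReal ?_
      calc 1 - Real.exp (-(l * r)) ≤ max 1 l * min 1 r := one_sub_exp_le_mul_min hl.1.le hr
        _ ≤ max 1 (a+1) * min 1 r := by
            have h1 : (0:ℝ) ≤ min 1 r := le_min one_pos.le (le_of_lt hr)
            exact mul_le_mul_of_nonneg_right (max_le_max le_rfl hl.2.le) h1
    · rw [MeasureTheory.lintegral_const_mul' _ _ ENNReal.ofReal_ne_top]
      exact ENNReal.mul_ne_top ENNReal.ofReal_ne_top hΛ
    · refine (ae_restrict_iff' measurableSet_Ioi).2 (Eventually.of_forall fun r _ => ?_)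
      exact (ENNReal.continuous_ofReal.tendsto _).comp
        ((Continuous.tendsto (by continuity) a))
  have h2 : ContinuousAt
      (fun l => (∫⁻ r in Set.Ioi (0:ℝ), ENNReal.ofReal (1 - Real.exp (-(l*r))) ∂Λ).toReal + c)
      a := by
    refine ContinuousAt.add ?_ continuousAt_const
    exact (ENNReal.tendsto_toReal (lintF_ne_top hΛ ha.le)).comp hI
  refine h2.congr ?_
  have hev : ∀ᶠ l in nhds a, l ≠ 0 := eventually_ne_nhds ha.ne'
  filter_upwards [hev] with l hl
  simp [laplaceExpF, hl]

lemma laplaceExpF_linear_bound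
    (hΛ : (∫⁻ r in Set.Ioi (0 : ℝ), ENNReal.ofReal (min 1 r) ∂Λ) ≠ ⊤) (hc : 0 ≤ c) :
    ∃ a b : ℝ, 0 ≤ a ∧ a ≤ 1/2 ∧ 0 ≤ b ∧ ∀ K, 0 ≤ K → laplaceExpF Λ c K ≤ a * K + b := by
  set ν : Measure ℝ := (Λ.restrict (Set.Ioi 0)).withDensity fun r => ENNReal.ofReal (min 1 r)
    with hνdef
  have hνuniv : ν Set.univ = ∫⁻ r in Set.Ioi (0 : ℝ), ENNReal.ofReal (min 1 r) ∂Λ := by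
    rw [hνdef, withDensity_apply _ MeasurableSet.univ, Measure.restrict_univ]
  have hνfin : IsFiniteMeasure ν := ⟨by rw [hνuniv]; exact hΛ.lt_top⟩
  have hiInter : (⋂ n : ℕ, Set.Ioc (0:ℝ) (1/(n+1))) = ∅ := by
    ext y
    simp only [Set.mem_iInter, Set.mem_Ioc, Set.mem_empty_iff_false, iff_false, not_forall]
    by_cases hy : 0 < y
    · obtain ⟨n, hn⟩ := exists_nat_one_div_lt hy
      exact ⟨n, fun h => absurd h.2 (not_le.2 hn)⟩
    · exact ⟨0, fun h => hy h.1⟩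
  have htend : Tendsto (fun n : ℕ => ν (Set.Ioc (0:ℝ) (1/(n+1)))) atTop (nhds 0) := by
    have := tendsto_measure_iInter_atTop (μ := ν) (s := fun n : ℕ => Set.Ioc (0:ℝ) (1/(n+1)))
      (fun n => measurableSet_Ioc.nullMeasurableSet)
      (fun i j hij => Set.Ioc_subset_Ioc le_rfl (by
        have : (0:ℝ) < i + 1 := by positivity
        apply one_div_le_one_div_of_le this (by exact_mod_cast by linarith)))
      ⟨0, measure_ne_top ν _⟩
    rwa [hiInter, measure_empty] at this
  have h4 : ∀ᶠ n : ℕ in atTop, ν (Set.Ioc (0:ℝ) (1/(n+1))) < ENNReal.ofReal (1/2) :=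
    htend.eventually_lt_const (by simp)
  obtain ⟨n, hn⟩ := h4.exists
  set δ : ℝ := 1/(n+1) with hδdef
  have hδpos : 0 < δ := by positivity
  have hδle : δ ≤ 1 := by
    rw [hδdef]; rw [div_le_one (by positivity)]; exact_mod_cast by linarith [Nat.zero_le n]
  -- Λ (Ioi δ) finite
  have hΛδ : Λ (Set.Ioi δ) ≠ ⊤ := by
    intro htop
    have hle : ENNReal.ofReal δ * Λ (Set.Ioi δ)
        ≤ ∫⁻ r in Set.Ioi (0 : ℝ), ENNReal.ofReal (min 1 r) ∂Λ := by
      calc ENNReal.ofReal δ * Λ (Set.Ioi δ)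
          = ∫⁻ _ in Set.Ioi δ, ENNReal.ofReal δ ∂Λ := by
            rw [setLIntegral_const, mul_comm]
        _ ≤ ∫⁻ r in Set.Ioi δ, ENNReal.ofReal (min 1 r) ∂Λ := by
            refine setLIntegral_mono' measurableSet_Ioi (fun r hr => ?_)
            exact ENNReal.ofReal_le_ofReal (le_min hδle (le_of_lt hr))
        _ ≤ ∫⁻ r in Set.Ioi (0:ℝ), ENNReal.ofReal (min 1 r) ∂Λ :=
            lintegral_mono_set (Set.Ioi_subset_Ioi hδpos.le)
    rw [htop, ENNReal.mul_top (by simp [hδpos])] at hle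
    exact hΛ (top_le_iff.1 hle)
  -- the measure of the small interval
  have hνIoc : ν (Set.Ioc (0:ℝ) δ) = ∫⁻ r in Set.Ioc (0:ℝ) δ, ENNReal.ofReal r ∂Λ := by
    rw [hνdef, withDensity_apply _ measurableSet_Ioc, Measure.restrict_restrict measurableSet_Ioc]
    rw [Set.inter_eq_self_of_subset_left (fun y hy => hy.1)]
    refine setLIntegral_congr_fun measurableSet_Ioc (fun r hr => ?_)
    rw [min_eq_right (hr.2.trans hδle)]
  refine ⟨(ν (Set.Ioc (0:ℝ) δ)).toReal, (Λ (Set.Ioi δ)).toReal + c, ENNReal.toReal_nonneg,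
    ?_, by positivity, ?_⟩
  · exact ENNReal.toReal_le_of_le_ofReal (by norm_num) hn.le
  intro K hK
  have hsplit : (∫⁻ r in Set.Ioi (0:ℝ), ENNReal.ofReal (1 - Real.exp (-(K * r))) ∂Λ)
      ≤ ENNReal.ofReal K * ν (Set.Ioc (0:ℝ) δ) + Λ (Set.Ioi δ) := by
    have hun : Set.Ioi (0:ℝ) = Set.Ioc (0:ℝ) δ ∪ Set.Ioi δ := (Set.Ioc_union_Ioi_eq_Ioi hδpos.le).symm
    rw [hun, lintegral_union measurableSet_Ioi (Set.Ioc_disjoint_Ioi le_rfl)]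
    gcongr ?_ + ?_
    · rw [hνIoc, ← MeasureTheory.lintegral_const_mul' _ _ ENNReal.ofReal_ne_top]
      refine setLIntegral_mono' measurableSet_Ioc (fun r hr => ?_)
      rw [← ENNReal.ofReal_mul hK]
      exact ENNReal.ofReal_le_ofReal one_sub_exp_le
    · calc (∫⁻ r in Set.Ioi δ, ENNReal.ofReal (1 - Real.exp (-(K * r))) ∂Λ)
          ≤ ∫⁻ _ in Set.Ioi δ, 1 ∂Λ := by
            refine setLIntegral_mono' measurableSet_Ioi (fun r _ => ?_)
            exact ENNReal.ofReal_le_one.2 one_sub_exp_le_one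
        _ = Λ (Set.Ioi δ) := by rw [setLIntegral_const, one_mul]
  have hrhs_ne : ENNReal.ofReal K * ν (Set.Ioc (0:ℝ) δ) + Λ (Set.Ioi δ) ≠ ⊤ :=
    ENNReal.add_ne_top.2 ⟨ENNReal.mul_ne_top ENNReal.ofReal_ne_top (measure_ne_top ν _), hΛδ⟩
  have h1 : (∫⁻ r in Set.Ioi (0:ℝ), ENNReal.ofReal (1 - Real.exp (-(K * r))) ∂Λ).toReal
      ≤ K * (ν (Set.Ioc (0:ℝ) δ)).toReal + (Λ (Set.Ioi δ)).toReal := by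
    have := ENNReal.toReal_mono hrhs_ne hsplit
    rwa [ENNReal.toReal_add (ENNReal.mul_ne_top ENNReal.ofReal_ne_top (measure_ne_top ν _)) hΛδ,
      ENNReal.toReal_mul, ENNReal.toReal_ofReal hK] at this
  have hite : (if K = 0 then (0:ℝ) else c) ≤ c := by split <;> simp [hc]
  unfold laplaceExpF
  nlinarith [h1, hite]

lemma le_laplaceExpF_of_le_eta
    (hΛ : (∫⁻ r in Set.Ioi (0 : ℝ), ENNReal.ofReal (min 1 r) ∂Λ) ≠ ⊤) (hc : 0 ≤ c)
    {η : ℝ} (hfix : laplaceExpF Λ c η = η) (hη : 0 ≤ η)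
    {s : ℝ} (h0 : 0 ≤ s) (hs : s ≤ η) : s ≤ laplaceExpF Λ c s := by
  rcases eq_or_lt_of_le h0 with h | hpos
  · rw [← h]; simp [laplaceExpF]
  have hηpos : 0 < η := lt_of_lt_of_le hpos hs
  set t : ℝ := s / η with htdef
  have ht0 : 0 ≤ t := by positivity
  have ht1 : t ≤ 1 := by rw [htdef, div_le_one hηpos]; exact hs
  have hst : s = t * η := by rw [htdef, div_mul_cancel₀ s hηpos.ne']
  -- pointwise inequality
  have hpt : ∀ r : ℝ, 0 < r →
      t * (1 - Real.exp (-(η * r))) ≤ 1 - Real.exp (-(s * r)) := by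
    intro r hr
    have key : Real.exp (-(t * (η * r))) ≤ t * Real.exp (-(η * r)) + (1 - t) := by
      have hcvx := convexOn_exp.2 (Set.mem_univ (-(η * r))) (Set.mem_univ (0:ℝ))
        (show (0:ℝ) ≤ t from ht0) (show (0:ℝ) ≤ 1 - t by linarith)
        (show t + (1 - t) = 1 by ring)
      simp only [smul_eq_mul, mul_zero, add_zero, Real.exp_zero, mul_one] at hcvx
      have harg : t * -(η * r) = -(t * (η * r)) := by ring
      rwa [harg] at hcvx
    have : s * r = t * (η * r) := by rw [hst]; ring
    rw [this]; linarith
  -- lintegral inequality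
  have hlin : ENNReal.ofReal t
        * (∫⁻ r in Set.Ioi (0:ℝ), ENNReal.ofReal (1 - Real.exp (-(η * r))) ∂Λ)
      ≤ ∫⁻ r in Set.Ioi (0:ℝ), ENNReal.ofReal (1 - Real.exp (-(s * r))) ∂Λ := by
    rw [← MeasureTheory.lintegral_const_mul' _ _ ENNReal.ofReal_ne_top]
    refine setLIntegral_mono' measurableSet_Ioi (fun r hr => ?_)
    rw [← ENNReal.ofReal_mul ht0]
    exact ENNReal.ofReal_le_ofReal (hpt r hr)
  have h2 : t * (∫⁻ r in Set.Ioi (0:ℝ), ENNReal.ofReal (1 - Real.exp (-(η * r))) ∂Λ).toReal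
      ≤ (∫⁻ r in Set.Ioi (0:ℝ), ENNReal.ofReal (1 - Real.exp (-(s * r))) ∂Λ).toReal := by
    have := ENNReal.toReal_mono (lintF_ne_top hΛ h0) hlin
    rwa [ENNReal.toReal_mul, ENNReal.toReal_ofReal ht0] at this
  have hηne : η ≠ 0 := hηpos.ne'
  have hsne : s ≠ 0 := hpos.ne'
  have hFη : laplaceExpF Λ c η
      = (∫⁻ r in Set.Ioi (0:ℝ), ENNReal.ofReal (1 - Real.exp (-(η * r))) ∂Λ).toReal + c := by
    simp [laplaceExpF, hηne]
  have hFs : laplaceExpF Λ c s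
      = (∫⁻ r in Set.Ioi (0:ℝ), ENNReal.ofReal (1 - Real.exp (-(s * r))) ∂Λ).toReal + c := by
    simp [laplaceExpF, hsne]
  have hs2 : s = t * ((∫⁻ r in Set.Ioi (0:ℝ),
      ENNReal.ofReal (1 - Real.exp (-(η * r))) ∂Λ).toReal + c) := by
    rw [← hFη, hfix, ← hst]
  rw [hFs]
  nlinarith [h2, ht0, ht1, hc]
end PartA2


lemma iterate_tendsto_fixed {f : ℝ → ℝ} {η lam : ℝ} (hη0 : 0 ≤ η)
    (hmono : ∀ a b : ℝ, 0 ≤ a → a ≤ b → f a ≤ f b) (hfix : f η = η)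
    (hlt : ∀ y, η < y → f y < y) (hcont : ∀ a : ℝ, 0 < a → ContinuousAt f a)
    (hgt : η < lam) : Tendsto (fun n => f^[n] lam) atTop (nhds η) := by
  set a : ℕ → ℝ := fun n => f^[n] lam with hadef
  have hge : ∀ n, η ≤ a n := by
    intro n; induction n with
    | zero => exact hgt.le
    | succ n ih =>
      have h1 : a (n+1) = f (a n) := Function.iterate_succ_apply' f n lam
      rw [h1, ← hfix]; exact hmono _ _ hη0 ih
  have hanti : Antitone a := by
    apply antitone_nat_of_succ_le
    intro n
    have hstep : a (n+1) = f (a n) := Function.iterate_succ_apply' f n lam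
    rcases eq_or_lt_of_le (hge n) with h | h
    · rw [hstep, ← h, hfix]
    · rw [hstep]; exact (hlt _ h).le
  have hbdd : BddBelow (Set.range a) := ⟨η, by rintro _ ⟨n, rfl⟩; exact hge n⟩
  have hlim := tendsto_atTop_ciInf hanti hbdd
  have hLη : η ≤ ⨅ n, a n := le_ciInf hge
  rcases eq_or_lt_of_le hLη with h | h
  · rwa [← h] at hlim
  · exfalso
    have hfL : f (⨅ n, a n) = ⨅ n, a n := by
      have h1 : Tendsto (fun n => a (n+1)) atTop (nhds (⨅ n, a n)) :=
        hlim.comp (tendsto_add_atTop_nat 1)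
      have h2 : Tendsto (fun n => f (a n)) atTop (nhds (f (⨅ n, a n))) :=
        ((hcont _ (lt_of_le_of_lt hη0 h)).tendsto).comp hlim
      have h3 : (fun n => a (n+1)) = fun n => f (a n) :=
        funext fun n => Function.iterate_succ_apply' f n lam
      rw [h3] at h1
      exact tendsto_nhds_unique h2 h1
    exact absurd (hlt _ h) (by rw [hfL]; exact lt_irrefl _)

lemma iterate_affine_tendsto {f : ℝ → ℝ} {lam ustar : ℝ} (hlam : 0 < lam)
    (hmono : ∀ a b : ℝ, 0 ≤ a → a ≤ b → f a ≤ f b)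
    (hnn : ∀ y : ℝ, 0 ≤ y → 0 ≤ f y) (hcont : ∀ a : ℝ, 0 < a → ContinuousAt f a)
    (hstar : lam + f ustar = ustar) (hstar0 : 0 ≤ ustar) :
    lam ≤ (⨆ n, (fun y => lam + f y)^[n] lam)
    ∧ (⨆ n, (fun y => lam + f y)^[n] lam) ≤ ustar
    ∧ (⨆ n, (fun y => lam + f y)^[n] lam)
        = lam + f (⨆ n, (fun y => lam + f y)^[n] lam)
    ∧ Tendsto (fun n => (fun y => lam + f y)^[n] lam) atTop
        (nhds (⨆ n, (fun y => lam + f y)^[n] lam))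
    ∧ ∀ n, (fun y => lam + f y)^[n] lam ≤ ustar := by
  set u : ℕ → ℝ := fun n => (fun y => lam + f y)^[n] lam with hudef
  have hstep : ∀ n, u (n+1) = lam + f (u n) :=
    fun n => Function.iterate_succ_apply' _ n lam
  have hlow : ∀ n, lam ≤ u n := by
    intro n; induction n with
    | zero => exact le_rfl
    | succ n ih =>
      rw [hstep n]
      have := hnn (u n) (hlam.le.trans ih); linarith
  have hup : ∀ n, u n ≤ ustar := by
    intro n; induction n with
    | zero =>
      have := hnn ustar hstar0
      show lam ≤ ustar; linarith
    | succ n ih =>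
      rw [hstep n, ← hstar]
      have := hmono (u n) ustar (hlam.le.trans (hlow n)) ih; linarith
  have hmon : Monotone u := by
    apply monotone_nat_of_le_succ
    intro n; induction n with
    | zero =>
      rw [hstep 0]
      have : u 0 = lam := rfl
      rw [this]
      have := hnn lam hlam.le; linarith
    | succ n ih =>
      rw [hstep n, hstep (n+1)]
      have := hmono (u n) (u (n+1)) (hlam.le.trans (hlow n)) ih; linarith
  have hbdd : BddAbove (Set.range u) := ⟨ustar, by rintro _ ⟨n, rfl⟩; exact hup n⟩
  have hlim := tendsto_atTop_ciSup hmon hbdd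
  have hv1 : lam ≤ ⨆ n, u n := le_ciSup_of_le hbdd 0 le_rfl
  refine ⟨hv1, ciSup_le hup, ?_, hlim, hup⟩
  have h1 : Tendsto (fun n => u (n+1)) atTop (nhds (⨆ n, u n)) :=
    hlim.comp (tendsto_add_atTop_nat 1)
  have h2 : Tendsto (fun n => lam + f (u n)) atTop (nhds (lam + f (⨆ n, u n))) :=
    Tendsto.const_add lam (((hcont _ (hlam.trans_le hv1)).tendsto).comp hlim)
  have h3 : (fun n => u (n+1)) = fun n => lam + f (u n) := funext hstep
  rw [h3] at h1
  exact tendsto_nhds_unique h1 h2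

lemma iterate_affine_mono_in_lam {f : ℝ → ℝ}
    (hmono : ∀ a b : ℝ, 0 ≤ a → a ≤ b → f a ≤ f b)
    (hnn : ∀ y : ℝ, 0 ≤ y → 0 ≤ f y)
    {lam lam' : ℝ} (h0 : 0 < lam) (h : lam ≤ lam') :
    ∀ n, (fun y => lam + f y)^[n] lam ≤ (fun y => lam' + f y)^[n] lam' := by
  have key : ∀ n, lam ≤ (fun y => lam + f y)^[n] lam ∧
      (fun y => lam + f y)^[n] lam ≤ (fun y => lam' + f y)^[n] lam' := by
    intro n
    induction n with
    | zero => exact ⟨le_rfl, h⟩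
    | succ n ih =>
      rw [Function.iterate_succ_apply' (fun y => lam + f y) n lam,
        Function.iterate_succ_apply' (fun y => lam' + f y) n lam']
      constructor
      · have := hnn _ (h0.le.trans ih.1); linarith
      · have := hmono _ _ (h0.le.trans ih.1) ih.2; linarith
  exact fun n => (key n).2


noncomputable def rfunE (f : ℝ → ℝ) (z : ℝ) : ENNReal :=
  ⨅ q : ℚ, if z < (q:ℝ) then ENNReal.ofReal (f q) else ⊤

noncomputable def rfun (f : ℝ → ℝ) (z : ℝ) : ℝ := (rfunE f z).toReal

noncomputable def lfunE (f : ℝ → ℝ) (z : ℝ) : ENNReal :=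
  ⨆ q : ℚ, if 0 ≤ (q:ℝ) ∧ (q:ℝ) < z then ENNReal.ofReal (f q) else 0

noncomputable def lfun (f : ℝ → ℝ) (z : ℝ) : ℝ := (lfunE f z).toReal

lemma measurable_rfun : Measurable (fun p : (ℝ → ℝ) × ℝ => rfun p.1 p.2) := by
  apply ENNReal.measurable_toReal.comp
  refine Measurable.iInf (fun q => ?_)
  refine Measurable.ite ?_ ?_ measurable_const
  · exact measurableSet_lt measurable_snd measurable_const
  · exact ENNReal.measurable_ofReal.comp ((measurable_pi_apply (q:ℝ)).comp measurable_fst)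

lemma measurable_lfun : Measurable (fun p : (ℝ → ℝ) × ℝ => lfun p.1 p.2) := by
  apply ENNReal.measurable_toReal.comp
  refine Measurable.iSup (fun q => ?_)
  refine Measurable.ite ?_ ?_ measurable_const
  · have h1 : MeasurableSet {p : (ℝ → ℝ) × ℝ | 0 ≤ (q:ℝ)} := by
      by_cases h : 0 ≤ (q:ℝ) <;> simp [h]
    have h2 : MeasurableSet {p : (ℝ → ℝ) × ℝ | (q:ℝ) < p.2} :=
      measurableSet_lt measurable_const measurable_snd
    exact h1.inter h2
  · exact ENNReal.measurable_ofReal.comp ((measurable_pi_apply (q:ℝ)).comp measurable_fst)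

noncomputable def gseq (x : ℝ) : (m : ℕ) → (Fin (m+1) → ℝ → ℝ) → ℝ
  | 0, _ => x
  | (m+1), v => rfun (v (Fin.last (m+1))) (gseq x m (fun i => v i.castSucc))

lemma measurable_gseq (x : ℝ) : ∀ m, Measurable (gseq x m)
  | 0 => measurable_const
  | (m+1) => by
    have h1 : Measurable fun v : Fin (m+2) → ℝ → ℝ => v (Fin.last (m+1)) :=
      measurable_pi_apply _
    have h2 : Measurable fun v : Fin (m+2) → ℝ → ℝ =>
        gseq x m (fun i => v i.castSucc) :=
      (measurable_gseq x m).comp (measurable_pi_lambda _ fun i => measurable_pi_apply _)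
    exact measurable_rfun.comp (h1.prodMk h2)

section Laplace
variable {Ω : Type*} [MeasurableSpace Ω] (μ : Measure Ω) [IsProbabilityMeasure μ]

lemma integrable_exp_neg {f : Ω → ℝ} (hf : Measurable f) (hnn : ∀ ω, 0 ≤ f ω) :
    Integrable (fun ω => Real.exp (-(f ω))) μ := by
  refine Integrable.mono' (integrable_const 1)
      (Real.measurable_exp.comp hf.neg).aestronglyMeasurable
      (Eventually.of_forall fun ω => ?_)
  rw [Real.norm_eq_abs, abs_of_pos (Real.exp_pos _)]
  exact Real.exp_le_one_iff.2 (by linarith [hnn ω])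

lemma lintegral_ofReal_exp_neg {f : Ω → ℝ} (hf : Measurable f) (hnn : ∀ ω, 0 ≤ f ω) :
    ∫⁻ ω, ENNReal.ofReal (Real.exp (-(f ω))) ∂μ
      = ENNReal.ofReal (∫ ω, Real.exp (-(f ω)) ∂μ) :=
  (ofReal_integral_eq_lintegral_ofReal (integrable_exp_neg μ hf hnn)
    (Eventually.of_forall fun ω => (Real.exp_pos _).le)).symm

/-- Laplace transform of the right-limit functional `rfun` -/
lemma lintegral_exp_rfun (G : ℝ → ℝ) (T : ℝ → Ω → ℝ)
    (hT0 : ∀ ω, T 0 ω = 0) (hTmono : ∀ ω, Monotone fun t => T t ω)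
    (hTmeas : ∀ t, Measurable (T t))
    (hlap : ∀ t, 0 ≤ t → ∀ l, 0 ≤ l →
      ∫ ω, Real.exp (-(l * T t ω)) ∂μ = Real.exp (-(t * G l)))
    {z β : ℝ} (hz : 0 ≤ z) (hβ : 0 ≤ β) :
    ∫⁻ ω, ENNReal.ofReal (Real.exp (-(β * rfun (fun t => T t ω) z))) ∂μ
      = ENNReal.ofReal (Real.exp (-(z * G β))) := by
  have hTnn : ∀ t ω, 0 ≤ t → 0 ≤ T t ω := by
    intro t ω ht
    have := (hTmono ω) ht
    simpa [hT0 ω] using this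
  -- rational sequence decreasing to z
  have hex : ∀ k : ℕ, ∃ q : ℚ, z < (q:ℝ) ∧ (q:ℝ) < z + 1/(k+1) := by
    intro k
    obtain ⟨q, h1, h2⟩ := exists_rat_btwn (show z < z + 1/(k+1) by
      have : (0:ℝ) < 1/(k+1) := by positivity
      linarith)
    exact ⟨q, h1, h2⟩
  choose q hq1 hq2 using hex
  have hqz : Tendsto (fun k => ((q k : ℝ))) atTop (nhds z) := by
    have hub : Tendsto (fun k : ℕ => z + 1/(k+1)) atTop (nhds z) := by
      have := tendsto_one_div_add_atTop_nhds_zero_nat (𝕜 := ℝ)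
      have h2 := tendsto_const_nhds (x := z) (f := atTop (α := ℕ)) |>.add this
      simpa using h2
    exact tendsto_of_tendsto_of_tendsto_of_le_of_le tendsto_const_nhds hub
      (fun k => (hq1 k).le) (fun k => (hq2 k).le)
  -- pointwise facts
  have hub : ∀ ω (q' : ℚ), z < (q':ℝ) → rfun (fun t => T t ω) z ≤ T q' ω := by
    intro ω q' hq'
    have hle : rfunE (fun t => T t ω) z ≤ ENNReal.ofReal (T q' ω) := by
      have := iInf_le (fun q : ℚ => if z < (q:ℝ) then ENNReal.ofReal (T (q:ℝ) ω) else ⊤) q'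
      rwa [if_pos hq'] at this
    have := ENNReal.toReal_mono ENNReal.ofReal_ne_top hle
    rwa [ENNReal.toReal_ofReal (hTnn _ ω (hz.trans hq'.le))] at this
  have hfin : ∀ ω, rfunE (fun t => T t ω) z ≠ ⊤ := by
    intro ω
    have h := iInf_le
      (fun q'' : ℚ => if z < ((q'':ℚ):ℝ) then ENNReal.ofReal (T ((q'':ℚ):ℝ) ω) else ⊤) (q 0)
    rw [if_pos (hq1 0)] at h
    exact ne_top_of_le_ne_top ENNReal.ofReal_ne_top h
  have happrox : ∀ ω (ε : ℝ), 0 < ε → ∃ q' : ℚ, z < (q':ℝ) ∧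
      T q' ω < rfun (fun t => T t ω) z + ε := by
    intro ω ε hε
    have hlt : rfunE (fun t => T t ω) z
        < rfunE (fun t => T t ω) z + ENNReal.ofReal ε :=
      ENNReal.lt_add_right (hfin ω) (by simp [hε, hε.le])
    obtain ⟨q', hq'⟩ := iInf_lt_iff.1
      (show (⨅ q'' : ℚ, if z < ((q'':ℚ):ℝ) then ENNReal.ofReal (T ((q'':ℚ):ℝ) ω) else ⊤)
          < rfunE (fun t => T t ω) z + ENNReal.ofReal ε from hlt)
    by_cases hcase : z < (q':ℝ)
    · rw [if_pos hcase] at hq'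
      refine ⟨q', hcase, ?_⟩
      have h4 := (ENNReal.toReal_lt_toReal ENNReal.ofReal_ne_top
        (ENNReal.add_ne_top.2 ⟨hfin ω, ENNReal.ofReal_ne_top⟩)).2 hq'
      rwa [ENNReal.toReal_ofReal (hTnn _ ω (hz.trans hcase.le)),
        ENNReal.toReal_add (hfin ω) ENNReal.ofReal_ne_top,
        ENNReal.toReal_ofReal hε.le] at h4
    · rw [if_neg hcase] at hq'
      exact absurd hq' (by simp)
  have hptw : ∀ ω, Tendsto (fun k => T (q k) ω) atTop
      (nhds (rfun (fun t => T t ω) z)) := by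
    intro ω
    rw [tendsto_order]
    constructor
    · intro b hb
      refine Eventually.of_forall fun k => lt_of_lt_of_le hb (hub ω (q k) (hq1 k))
    · intro b hb
      obtain ⟨q', hq'1, hq'2⟩ := happrox ω (b - rfun (fun t => T t ω) z) (by linarith)
      have hev : ∀ᶠ k in atTop, ((q k : ℝ)) < (q':ℝ) := hqz.eventually_lt_const hq'1
      filter_upwards [hev] with k hk
      calc T (q k) ω ≤ T q' ω := hTmono ω hk.le
        _ < b := by linarith
  -- limit of both sides
  have hlhs : Tendsto (fun k => ∫⁻ ω, ENNReal.ofReal (Real.exp (-(β * T (q k) ω))) ∂μ)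
      atTop (nhds (∫⁻ ω, ENNReal.ofReal (Real.exp (-(β * rfun (fun t => T t ω) z))) ∂μ)) := by
    refine tendsto_lintegral_filter_of_dominated_convergence (fun _ => 1)
      (Eventually.of_forall fun k => ?_) (Eventually.of_forall fun k => ?_) ?_ ?_
    · exact ENNReal.measurable_ofReal.comp
        (Real.measurable_exp.comp ((hTmeas (q k)).const_mul β).neg)
    · exact Eventually.of_forall fun ω =>
        ENNReal.ofReal_le_one.2 (Real.exp_le_one_iff.2 (by
          have := hTnn (q k) ω (hz.trans (hq1 k).le); nlinarith))
    · simp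
    · refine Eventually.of_forall fun ω => ?_
      have hcont : Continuous fun y : ℝ => ENNReal.ofReal (Real.exp (-(β * y))) :=
        ENNReal.continuous_ofReal.comp (by continuity)
      exact (hcont.tendsto _).comp (hptw ω)
  have heq : ∀ k, ∫⁻ ω, ENNReal.ofReal (Real.exp (-(β * T (q k) ω))) ∂μ
      = ENNReal.ofReal (Real.exp (-((q k : ℝ) * G β))) := by
    intro k
    have hmeas : Measurable fun ω => β * T (q k) ω := (hTmeas (q k)).const_mul β
    have hnn : ∀ ω, 0 ≤ β * T (q k) ω := fun ω =>
      mul_nonneg hβ (hTnn _ ω (hz.trans (hq1 k).le))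
    rw [show (fun ω => ENNReal.ofReal (Real.exp (-(β * T (q k) ω))))
        = fun ω => ENNReal.ofReal (Real.exp (-((fun ω => β * T (q k) ω) ω))) from rfl,
      lintegral_ofReal_exp_neg μ hmeas hnn, hlap (q k) (hz.trans (hq1 k).le) β hβ]
  have hrhs : Tendsto (fun k => ENNReal.ofReal (Real.exp (-((q k : ℝ) * G β))))
      atTop (nhds (ENNReal.ofReal (Real.exp (-(z * G β))))) := by
    have hcont : Continuous fun y : ℝ => ENNReal.ofReal (Real.exp (-(y * G β))) :=
      ENNReal.continuous_ofReal.comp (by continuity)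
    exact (hcont.tendsto _).comp hqz
  rw [← funext heq] at hrhs
  exact tendsto_nhds_unique hlhs hrhs

end Laplace

section Laplace2
variable {Ω : Type*} [MeasurableSpace Ω] (μ : Measure Ω) [IsProbabilityMeasure μ]

/-- Laplace transform of the left-limit functional `lfun` -/
lemma lintegral_exp_lfun (G : ℝ → ℝ) (T : ℝ → Ω → ℝ)
    (hT0 : ∀ ω, T 0 ω = 0) (hTmono : ∀ ω, Monotone fun t => T t ω)
    (hTmeas : ∀ t, Measurable (T t))
    (hlap : ∀ t, 0 ≤ t → ∀ l, 0 ≤ l →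
      ∫ ω, Real.exp (-(l * T t ω)) ∂μ = Real.exp (-(t * G l)))
    {z β : ℝ} (hz : 0 ≤ z) (hβ : 0 ≤ β) :
    ∫⁻ ω, ENNReal.ofReal (Real.exp (-(β * lfun (fun t => T t ω) z))) ∂μ
      = ENNReal.ofReal (Real.exp (-(z * G β))) := by
  have hTnn : ∀ t ω, 0 ≤ t → 0 ≤ T t ω := by
    intro t ω ht
    have := (hTmono ω) ht
    simpa [hT0 ω] using this
  rcases eq_or_lt_of_le hz with h0 | hzpos
  · -- z = 0
    have hz0 : z = 0 := h0.symm
    subst hz0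
    have hlz : ∀ ω, lfun (fun t => T t ω) 0 = 0 := by
      intro ω
      have h1 : lfunE (fun t => T t ω) 0 = 0 := by
        refine le_antisymm (iSup_le fun q'' => ?_) (zero_le)
        rw [if_neg]
        rintro ⟨ha, hb⟩
        linarith
      rw [lfun, h1, ENNReal.toReal_zero]
    simp only [hlz, mul_zero, neg_zero, Real.exp_zero, ENNReal.ofReal_one, lintegral_one,
      measure_univ, zero_mul]
  · -- z > 0
    have hex : ∀ k : ℕ, ∃ qq : ℚ, max (z - 1/(k+1)) 0 < (qq:ℝ) ∧ (qq:ℝ) < z := by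
      intro k
      refine exists_rat_btwn (max_lt ?_ hzpos)
      have : (0:ℝ) < 1/(k+1) := by positivity
      linarith
    choose q hq1 hq2 using hex
    have hq0 : ∀ k, 0 ≤ ((q k : ℚ):ℝ) := fun k => ((le_max_right _ 0).trans_lt (hq1 k)).le
    have hqz : Tendsto (fun k => ((q k : ℚ):ℝ)) atTop (nhds z) := by
      have hlb : Tendsto (fun k : ℕ => max (z - 1/(k+1)) 0) atTop (nhds z) := by
        have h1 : Tendsto (fun k : ℕ => z - 1/(k+1)) atTop (nhds z) := by
          have := tendsto_one_div_add_atTop_nhds_zero_nat (𝕜 := ℝ)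
          have h2 := tendsto_const_nhds (x := z) (f := atTop (α := ℕ)) |>.sub this
          simpa using h2
        have := h1.max (tendsto_const_nhds (x := (0:ℝ)))
        rwa [max_eq_left hz] at this
      exact tendsto_of_tendsto_of_tendsto_of_le_of_le hlb tendsto_const_nhds
        (fun k => (hq1 k).le) (fun k => (hq2 k).le)
    obtain ⟨q₀, hq₀⟩ := exists_rat_gt z
    have hfin : ∀ ω, lfunE (fun t => T t ω) z ≠ ⊤ := by
      intro ω
      refine ne_top_of_le_ne_top (ENNReal.ofReal_ne_top (r := T (q₀:ℝ) ω))
        (iSup_le fun q'' => ?_)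
      split_ifs with h
      · exact ENNReal.ofReal_le_ofReal (hTmono ω (h.2.trans hq₀).le)
      · exact zero_le
    have hub : ∀ ω (q' : ℚ), 0 ≤ (q':ℝ) → (q':ℝ) < z →
        T (q':ℝ) ω ≤ lfun (fun t => T t ω) z := by
      intro ω q' h1 h2
      have hle : ENNReal.ofReal (T (q':ℝ) ω) ≤ lfunE (fun t => T t ω) z := by
        have := le_iSup
          (fun q'' : ℚ => if 0 ≤ ((q'':ℚ):ℝ) ∧ ((q'':ℚ):ℝ) < z
            then ENNReal.ofReal (T ((q'':ℚ):ℝ) ω) else 0) q'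
        rwa [if_pos ⟨h1, h2⟩] at this
      have := ENNReal.toReal_mono (hfin ω) hle
      rwa [ENNReal.toReal_ofReal (hTnn _ ω h1)] at this
    have happrox : ∀ ω (ε : ℝ), 0 < ε → ∃ q' : ℚ, 0 ≤ (q':ℝ) ∧ (q':ℝ) < z ∧
        lfun (fun t => T t ω) z - ε < T (q':ℝ) ω := by
      intro ω ε hε
      rcases lt_or_ge (lfun (fun t => T t ω) z - ε) 0 with h | h
      · refine ⟨0, by simp, by simpa using hzpos, ?_⟩
        rw [Rat.cast_zero, hT0 ω]
        exact h
      · have hLpos : 0 < lfun (fun t => T t ω) z := by linarith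
        have hlt : ENNReal.ofReal (lfun (fun t => T t ω) z - ε)
            < lfunE (fun t => T t ω) z := by
          rw [show lfunE (fun t => T t ω) z
              = ENNReal.ofReal (lfun (fun t => T t ω) z) from
            (ENNReal.ofReal_toReal (hfin ω)).symm]
          exact ENNReal.ofReal_lt_ofReal_iff hLpos |>.2 (by linarith)
        obtain ⟨q', hq'⟩ := lt_iSup_iff.1 hlt
        by_cases hcase : 0 ≤ ((q':ℚ):ℝ) ∧ ((q':ℚ):ℝ) < z
        · rw [if_pos hcase] at hq'
          refine ⟨q', hcase.1, hcase.2, ?_⟩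
          exact (ENNReal.ofReal_lt_ofReal_iff_of_nonneg h).1 hq'
        · rw [if_neg hcase] at hq'
          exact absurd hq' (by simp)
    have hptw : ∀ ω, Tendsto (fun k => T (q k) ω) atTop
        (nhds (lfun (fun t => T t ω) z)) := by
      intro ω
      rw [tendsto_order]
      constructor
      · intro b hb
        obtain ⟨q', h1, h2, h3⟩ := happrox ω (lfun (fun t => T t ω) z - b) (by linarith)
        have hev : ∀ᶠ k in atTop, (q':ℝ) < ((q k : ℚ):ℝ) := hqz.eventually_const_lt h2
        filter_upwards [hev] with k hk
        calc b = lfun (fun t => T t ω) z - (lfun (fun t => T t ω) z - b) := by ring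
          _ < T (q':ℝ) ω := h3
          _ ≤ T (q k) ω := hTmono ω hk.le
      · intro b hb
        exact Eventually.of_forall fun k =>
          lt_of_le_of_lt (hub ω (q k) (hq0 k) (hq2 k)) hb
    have hlhs : Tendsto (fun k => ∫⁻ ω, ENNReal.ofReal (Real.exp (-(β * T (q k) ω))) ∂μ)
        atTop (nhds (∫⁻ ω, ENNReal.ofReal (Real.exp (-(β * lfun (fun t => T t ω) z))) ∂μ)) := by
      refine tendsto_lintegral_filter_of_dominated_convergence (fun _ => 1)
        (Eventually.of_forall fun k => ?_) (Eventually.of_forall fun k => ?_) ?_ ?_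
      · exact ENNReal.measurable_ofReal.comp
          (Real.measurable_exp.comp ((hTmeas (q k)).const_mul β).neg)
      · exact Eventually.of_forall fun ω =>
          ENNReal.ofReal_le_one.2 (Real.exp_le_one_iff.2 (by
            have := hTnn (q k) ω (hq0 k); nlinarith))
      · simp
      · refine Eventually.of_forall fun ω => ?_
        have hcont : Continuous fun y : ℝ => ENNReal.ofReal (Real.exp (-(β * y))) :=
          ENNReal.continuous_ofReal.comp (by continuity)
        exact (hcont.tendsto _).comp (hptw ω)
    have heq : ∀ k, ∫⁻ ω, ENNReal.ofReal (Real.exp (-(β * T (q k) ω))) ∂μ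
        = ENNReal.ofReal (Real.exp (-(((q k : ℚ):ℝ) * G β))) := by
      intro k
      have hmeas : Measurable fun ω => β * T (q k) ω := (hTmeas (q k)).const_mul β
      have hnn : ∀ ω, 0 ≤ β * T (q k) ω := fun ω => mul_nonneg hβ (hTnn _ ω (hq0 k))
      rw [show (fun ω => ENNReal.ofReal (Real.exp (-(β * T (q k) ω))))
          = fun ω => ENNReal.ofReal (Real.exp (-((fun ω => β * T (q k) ω) ω))) from rfl,
        lintegral_ofReal_exp_neg μ hmeas hnn, hlap (q k) (hq0 k) β hβ]
    have hrhs : Tendsto (fun k => ENNReal.ofReal (Real.exp (-(((q k : ℚ):ℝ) * G β))))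
        atTop (nhds (ENNReal.ofReal (Real.exp (-(z * G β))))) := by
      have hcont : Continuous fun y : ℝ => ENNReal.ofReal (Real.exp (-(y * G β))) :=
        ENNReal.continuous_ofReal.comp (by continuity)
      exact (hcont.tendsto _).comp hqz
    rw [← funext heq] at hrhs
    exact tendsto_nhds_unique hlhs hrhs

/-- Fubini-type splitting for an independent pair. -/
lemma lintegral_pair_indep {α β' : Type*} [MeasurableSpace α] [MeasurableSpace β']
    {X : Ω → α} {Y : Ω → β'} (hX : Measurable X) (hY : Measurable Y)
    (hind : IndepFun X Y μ) {k : α × β' → ENNReal} (hk : Measurable k) :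
    ∫⁻ ω, k (X ω, Y ω) ∂μ = ∫⁻ a, ∫⁻ ω, k (a, Y ω) ∂μ ∂(μ.map X) := by
  haveI : IsProbabilityMeasure (μ.map X) := Measure.isProbabilityMeasure_map hX.aemeasurable
  haveI : IsProbabilityMeasure (μ.map Y) := Measure.isProbabilityMeasure_map hY.aemeasurable
  have hmap := (indepFun_iff_map_prod_eq_prod_map_map hX.aemeasurable hY.aemeasurable).1 hind
  calc ∫⁻ ω, k (X ω, Y ω) ∂μ = ∫⁻ p, k p ∂(μ.map (fun ω => (X ω, Y ω))) :=
        (lintegral_map hk (hX.prodMk hY)).symm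
    _ = ∫⁻ p, k p ∂((μ.map X).prod (μ.map Y)) := by rw [hmap]
    _ = ∫⁻ a, ∫⁻ b, k (a, b) ∂(μ.map Y) ∂(μ.map X) := lintegral_prod _ hk.aemeasurable
    _ = ∫⁻ a, ∫⁻ ω, k (a, Y ω) ∂μ ∂(μ.map X) := by
        refine lintegral_congr fun a => ?_
        exact lintegral_map (hk.comp measurable_prodMk_left) hY

end Laplace2

/-- path of the n-th subordinator -/
def pathP {Ω : Type*} (S : ℕ → ℝ → Ω → ℝ) (n : ℕ) (ω : Ω) : ℝ → ℝ := fun t => S n t ω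

/-- tuple of the first m+1 paths -/
def pathW {Ω : Type*} (S : ℕ → ℝ → Ω → ℝ) (m : ℕ) (ω : Ω) : Fin (m+1) → ℝ → ℝ :=
  fun i => pathP S i ω

theorem stmt_5 {Ω : Type*} [MeasurableSpace Ω] (μ : Measure Ω) [IsProbabilityMeasure μ]
    (Λ : Measure ℝ) (c : ℝ) (hc : 0 ≤ c)
    (hΛ : (∫⁻ r in Set.Ioi (0 : ℝ), ENNReal.ofReal (min 1 r) ∂Λ) ≠ ⊤)
    (η : ℝ) (hη : IsGreatest {l : ℝ | 0 ≤ l ∧ laplaceExpF Λ c l = l} η)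
    (S : ℕ → ℝ → Ω → ℝ)
    (hSmeas : ∀ n, Measurable (fun ω => (fun t : ℝ => S n t ω)))
    (hS0 : ∀ n ω, S n 0 ω = 0)
    (hSmono : ∀ n ω, Monotone (fun t => S n t ω))
    (hSnonneg : ∀ n t ω, 0 ≤ t → 0 ≤ S n t ω)
    (hindep : iIndepFun
      (fun n ω => (fun t : ℝ => S n t ω)) μ)
    (hident : ∀ i j : ℕ, IdentDistrib (fun ω => (fun t : ℝ => S i t ω))
      (fun ω => (fun t : ℝ => S j t ω)) μ μ)
    (hlaplace : ∀ n : ℕ, ∀ t : ℝ, 0 ≤ t → ∀ l : ℝ, 0 ≤ l →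
      ∫ ω, Real.exp (-(l * S n t ω)) ∂μ = Real.exp (-(t * laplaceExpF Λ c l)))
    (x : ℝ) (hx : 0 ≤ x)
    (Z : ℕ → Ω → ℝ) (hZmeas : ∀ n, Measurable (Z n)) (hZ0 : ∀ ω, Z 0 ω = x)
    (hZrec : ∀ n ω, Z (n + 1) ω = S (n + 1) (Z n ω) ω) :
    μ {ω | Tendsto (fun n => Z n ω) atTop (nhds 0)} = ENNReal.ofReal (Real.exp (-(η * x))) ∧
    ∀ᵐ ω ∂μ, (Summable (fun n => Z n ω) ↔ Tendsto (fun n => Z n ω) atTop (nhds 0)) := by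
  classical
  -- ===== F facts =====
  have hη0 : 0 ≤ η := hη.1.1
  have hfixη : laplaceExpF Λ c η = η := hη.1.2
  have hubη : ∀ l, 0 ≤ l → laplaceExpF Λ c l = l → l ≤ η := fun l h1 h2 => hη.2 ⟨h1, h2⟩
  have hFnn : ∀ l : ℝ, 0 ≤ l → 0 ≤ laplaceExpF Λ c l := fun l _ => laplaceExpF_nonneg hc
  have hFmono : ∀ a b : ℝ, 0 ≤ a → a ≤ b → laplaceExpF Λ c a ≤ laplaceExpF Λ c b :=
    fun a b h1 h2 => laplaceExpF_mono hΛ hc h1 h2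
  have hFcont : ∀ a : ℝ, 0 < a → ContinuousAt (laplaceExpF Λ c) a :=
    fun a ha => laplaceExpF_continuousAt hΛ ha
  obtain ⟨ca, cb, hca0, hca, hcb0, hlinb⟩ := laplaceExpF_linear_bound hΛ hc
  have hFlt : ∀ y : ℝ, η < y → laplaceExpF Λ c y < y := by
    intro y hy
    by_contra hcon
    push_neg at hcon
    have hy0 : 0 < y := lt_of_le_of_lt hη0 hy
    rcases eq_or_lt_of_le hcon with heq | hlt2
    · exact absurd (hubη y hy0.le heq.symm) (not_le.2 hy)
    · set K := max (2*cb + 1) (y+1) with hK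
      have hKy : y < K := lt_of_lt_of_le (by linarith) (le_max_right _ _)
      have hK0 : 0 < K := hy0.trans hKy
      have hK2 : 2*cb + 1 ≤ K := le_max_left _ _
      have hFK : laplaceExpF Λ c K < K := by
        have h1 := hlinb K hK0.le
        nlinarith
      have hcontOn : ContinuousOn (fun u => laplaceExpF Λ c u - u) (Set.Icc y K) := by
        intro u hu
        have hu0 : 0 < u := lt_of_lt_of_le hy0 hu.1
        exact ((hFcont u hu0).sub continuousAt_id).continuousWithinAt
      have hivt := intermediate_value_Icc' hKy.le hcontOn
      have h0mem : (0:ℝ) ∈ Set.Icc (laplaceExpF Λ c K - K) (laplaceExpF Λ c y - y) :=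
        ⟨by linarith, by linarith⟩
      obtain ⟨u, hu, hfu⟩ := hivt h0mem
      have hule : u ≤ η := hubη u (hy0.le.trans hu.1) (by
        have : laplaceExpF Λ c u - u = 0 := hfu
        linarith)
      linarith [hu.1]
  have hFge : ∀ s : ℝ, 0 ≤ s → s ≤ η → s ≤ laplaceExpF Λ c s :=
    fun s h1 h2 => le_laplaceExpF_of_le_eta hΛ hc hfixη hη0 h1 h2
  -- ===== Z and measurability facts =====
  have hZnn : ∀ n ω, 0 ≤ Z n ω := by
    intro n
    induction n with
    | zero => intro ω; rw [hZ0]; exact hx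
    | succ n ih => intro ω; rw [hZrec]; exact hSnonneg (n+1) _ ω (ih ω)
  have hTmeas : ∀ n (t : ℝ), Measurable (fun ω => S n t ω) :=
    fun n t => (measurable_pi_apply t).comp (hSmeas n)
  have hWmeas : ∀ m, Measurable (pathW S m) :=
    fun m => measurable_pi_lambda _ fun i => hSmeas i
  have hindepWP : ∀ m : ℕ, IndepFun (pathW S m) (pathP S (m+1)) μ := by
    intro m
    have h := hindep.indepFun_finset (Finset.range (m+1)) {m+1}
      (by simp [Finset.disjoint_singleton_right]) hSmeas
    have hφ : Measurable (fun v : ((i : (Finset.range (m+1) : Finset ℕ)) → ℝ → ℝ) =>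
        (fun i : Fin (m+1) => v ⟨(i : ℕ), Finset.mem_range.2 i.isLt⟩)) :=
      measurable_pi_lambda _ fun i => measurable_pi_apply _
    have hψ : Measurable (fun v : ((i : ({m+1} : Finset ℕ)) → ℝ → ℝ) =>
        v ⟨m+1, Finset.mem_singleton_self _⟩) := measurable_pi_apply _
    exact h.comp hφ hψ
  have hgs : ∀ (m : ℕ) (ω : Ω), gseq x (m+1) (pathW S (m+1) ω)
      = rfun (pathP S (m+1) ω) (gseq x m (pathW S m ω)) := fun m ω => rfl
  -- ===== core computation =====
  have hcore : ∀ m : ℕ, (∀ᵐ ω ∂μ, Z m ω = gseq x m (pathW S m ω)) →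
      ∀ (h : (Fin (m+1) → ℝ → ℝ) → ENNReal), Measurable h → (∀ w, h w ≤ 1) →
      ∀ β : ℝ, 0 ≤ β →
      (∫⁻ ω, h (pathW S m ω)
          * ENNReal.ofReal (Real.exp (-(β * rfun (pathP S (m+1) ω) (Z m ω)))) ∂μ
        = ∫⁻ ω, h (pathW S m ω)
          * ENNReal.ofReal (Real.exp (-(Z m ω * laplaceExpF Λ c β))) ∂μ)
      ∧ (∫⁻ ω, h (pathW S m ω)
          * ENNReal.ofReal (Real.exp (-(β * lfun (pathP S (m+1) ω) (Z m ω)))) ∂μ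
        = ∫⁻ ω, h (pathW S m ω)
          * ENNReal.ofReal (Real.exp (-(Z m ω * laplaceExpF Λ c β))) ∂μ) := by
    intro m hm h hmeas hbd β hβ
    set Q' : (Fin (m+1) → ℝ → ℝ) → ℝ := fun w => max (gseq x m w) 0 with hQ'
    have hQ'meas : Measurable Q' := (measurable_gseq x m).max measurable_const
    have hQ'nn : ∀ w, 0 ≤ Q' w := fun w => le_max_right _ _
    have hae : ∀ᵐ ω ∂μ, Q' (pathW S m ω) = Z m ω := by
      filter_upwards [hm] with ω hω
      show max (gseq x m (pathW S m ω)) 0 = Z m ω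
      rw [← hω, max_eq_left (hZnn m ω)]
    have hMove : ∀ (rl : (ℝ → ℝ) → ℝ → ℝ),
        Measurable (fun p : (ℝ → ℝ) × ℝ => rl p.1 p.2) →
        (∀ (z : ℝ), 0 ≤ z →
          ∫⁻ ω, ENNReal.ofReal (Real.exp (-(β * rl (pathP S (m+1) ω) z))) ∂μ
            = ENNReal.ofReal (Real.exp (-(z * laplaceExpF Λ c β)))) →
        ∫⁻ ω, h (pathW S m ω)
            * ENNReal.ofReal (Real.exp (-(β * rl (pathP S (m+1) ω) (Z m ω)))) ∂μ
          = ∫⁻ ω, h (pathW S m ω)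
            * ENNReal.ofReal (Real.exp (-(Z m ω * laplaceExpF Λ c β))) ∂μ := by
      intro rl hrlmeas hrllap
      have hk : Measurable (fun p : (Fin (m+1) → ℝ → ℝ) × (ℝ → ℝ) =>
          h p.1 * ENNReal.ofReal (Real.exp (-(β * rl p.2 (Q' p.1))))) := by
        refine (hmeas.comp measurable_fst).mul ?_
        refine ENNReal.measurable_ofReal.comp (Real.measurable_exp.comp ?_)
        exact ((hrlmeas.comp (measurable_snd.prodMk
          (hQ'meas.comp measurable_fst))).const_mul β).neg
      calc ∫⁻ ω, h (pathW S m ω)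
            * ENNReal.ofReal (Real.exp (-(β * rl (pathP S (m+1) ω) (Z m ω)))) ∂μ
          = ∫⁻ ω, h (pathW S m ω)
            * ENNReal.ofReal (Real.exp (-(β * rl (pathP S (m+1) ω) (Q' (pathW S m ω))))) ∂μ := by
            refine lintegral_congr_ae ?_
            filter_upwards [hae] with ω hω
            rw [hω]
        _ = ∫⁻ w, ∫⁻ ω, h w
              * ENNReal.ofReal (Real.exp (-(β * rl (pathP S (m+1) ω) (Q' w)))) ∂μ
              ∂(μ.map (pathW S m)) :=
            lintegral_pair_indep μ (hWmeas m) (hSmeas (m+1)) (hindepWP m) hk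
        _ = ∫⁻ w, h w * ENNReal.ofReal (Real.exp (-(Q' w * laplaceExpF Λ c β)))
              ∂(μ.map (pathW S m)) := by
            refine lintegral_congr fun w => ?_
            rw [lintegral_const_mul' _ _ (ne_top_of_le_ne_top ENNReal.one_ne_top (hbd w)),
              hrllap (Q' w) (hQ'nn w)]
        _ = ∫⁻ ω, h (pathW S m ω)
              * ENNReal.ofReal (Real.exp (-(Q' (pathW S m ω) * laplaceExpF Λ c β))) ∂μ := by
            exact lintegral_map (hmeas.mul (ENNReal.measurable_ofReal.comp
              (Real.measurable_exp.comp ((hQ'meas.mul_const _).neg)))) (hWmeas m)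
        _ = ∫⁻ ω, h (pathW S m ω)
              * ENNReal.ofReal (Real.exp (-(Z m ω * laplaceExpF Λ c β))) ∂μ := by
            refine lintegral_congr_ae ?_
            filter_upwards [hae] with ω hω
            rw [hω]
    constructor
    · refine hMove rfun measurable_rfun ?_
      intro z hz
      exact lintegral_exp_rfun μ (laplaceExpF Λ c) (fun t ω => S (m+1) t ω)
        (fun ω => hS0 (m+1) ω) (fun ω => hSmono (m+1) ω) (fun t => hTmeas (m+1) t)
        (hlaplace (m+1)) hz hβ
    · refine hMove lfun measurable_lfun ?_
      intro z hz
      exact lintegral_exp_lfun μ (laplaceExpF Λ c) (fun t ω => S (m+1) t ω)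
        (fun ω => hS0 (m+1) ω) (fun ω => hSmono (m+1) ω) (fun t => hTmeas (m+1) t)
        (hlaplace (m+1)) hz hβ
  -- ===== identification of Z with the canonical version =====
  have hYZ : ∀ m : ℕ, ∀ᵐ ω ∂μ, Z m ω = gseq x m (pathW S m ω) := by
    intro m
    induction m with
    | zero => exact Filter.Eventually.of_forall fun ω => by rw [hZ0]; rfl
    | succ m ih =>
      obtain ⟨hR, hL⟩ := hcore m ih (fun _ => 1) measurable_const (fun _ => le_rfl) 1 one_pos.le
      simp only [one_mul] at hR hL
      have hsand : ∀ ω, lfun (pathP S (m+1) ω) (Z m ω) ≤ Z (m+1) ω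
          ∧ Z (m+1) ω ≤ rfun (pathP S (m+1) ω) (Z m ω) := by
        intro ω
        constructor
        · have hle : lfunE (pathP S (m+1) ω) (Z m ω) ≤ ENNReal.ofReal (Z (m+1) ω) := by
            refine iSup_le fun q => ?_
            split_ifs with hq
            · refine ENNReal.ofReal_le_ofReal ?_
              rw [hZrec m ω]
              exact hSmono (m+1) ω hq.2.le
            · exact zero_le
          have h5 := ENNReal.toReal_mono ENNReal.ofReal_ne_top hle
          rwa [ENNReal.toReal_ofReal (hZnn (m+1) ω)] at h5
        · obtain ⟨q₀, hq₀⟩ := exists_rat_gt (Z m ω)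
          have hfin : rfunE (pathP S (m+1) ω) (Z m ω) ≠ ⊤ := by
            have hile := iInf_le (fun q : ℚ => if Z m ω < ((q:ℚ):ℝ)
              then ENNReal.ofReal (pathP S (m+1) ω ((q:ℚ):ℝ)) else ⊤) q₀
            rw [if_pos hq₀] at hile
            exact ne_top_of_le_ne_top ENNReal.ofReal_ne_top hile
          have hge : ENNReal.ofReal (Z (m+1) ω) ≤ rfunE (pathP S (m+1) ω) (Z m ω) := by
            refine le_iInf fun q => ?_
            split_ifs with hq
            · refine ENNReal.ofReal_le_ofReal ?_
              rw [hZrec m ω]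
              exact hSmono (m+1) ω hq.le
            · exact le_top
          have h5 := ENNReal.toReal_mono hfin hge
          rwa [ENNReal.toReal_ofReal (hZnn (m+1) ω)] at h5
      set φR : Ω → ENNReal := fun ω =>
        ENNReal.ofReal (Real.exp (-rfun (pathP S (m+1) ω) (Z m ω))) with hφR
      set φL : Ω → ENNReal := fun ω =>
        ENNReal.ofReal (Real.exp (-lfun (pathP S (m+1) ω) (Z m ω))) with hφL
      have hmR : Measurable φR := by
        refine ENNReal.measurable_ofReal.comp (Real.measurable_exp.comp ?_)
        exact (measurable_rfun.comp ((hSmeas (m+1)).prodMk (hZmeas m))).neg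
      have hmL : Measurable φL := by
        refine ENNReal.measurable_ofReal.comp (Real.measurable_exp.comp ?_)
        exact (measurable_lfun.comp ((hSmeas (m+1)).prodMk (hZmeas m))).neg
      have hRL : ∫⁻ ω, φL ω ∂μ = ∫⁻ ω, φR ω ∂μ := hL.trans hR.symm
      have hRfin : ∫⁻ ω, φR ω ∂μ ≠ ⊤ := by
        refine ne_top_of_le_ne_top (ENNReal.one_ne_top) ?_
        calc ∫⁻ ω, φR ω ∂μ ≤ ∫⁻ _, 1 ∂μ := lintegral_mono (fun ω =>
              ENNReal.ofReal_le_one.2 (Real.exp_le_one_iff.2 (by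
                have h0 : 0 ≤ rfun (pathP S (m+1) ω) (Z m ω) := ENNReal.toReal_nonneg
                linarith)))
          _ = 1 := by simp
      have hleφ : ∀ ω, φR ω ≤ φL ω := by
        intro ω
        refine ENNReal.ofReal_le_ofReal (Real.exp_le_exp.2 ?_)
        have h6 := (hsand ω).1.trans (hsand ω).2
        linarith
      have hdiff0 : ∫⁻ ω, (φL ω - φR ω) ∂μ = 0 := by
        rw [lintegral_sub hmR hRfin (Filter.Eventually.of_forall hleφ), hRL, tsub_self]
      have hae0 : ∀ᵐ ω ∂μ, φL ω - φR ω = 0 :=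
        (lintegral_eq_zero_iff (hmL.sub hmR)).1 hdiff0
      have heqlr : ∀ᵐ ω ∂μ,
          lfun (pathP S (m+1) ω) (Z m ω) = rfun (pathP S (m+1) ω) (Z m ω) := by
        filter_upwards [hae0] with ω hω
        have hle2 : φL ω ≤ φR ω := tsub_eq_zero_iff_le.1 hω
        have heq : φL ω = φR ω := le_antisymm hle2 (hleφ ω)
        have h2 := congrArg ENNReal.toReal heq
        simp only [hφL, hφR, ENNReal.toReal_ofReal (Real.exp_pos _).le] at h2
        have h3 := Real.exp_eq_exp.1 h2
        linarith
      filter_upwards [heqlr, ih] with ω h1 h2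
      have h4 : Z (m+1) ω = rfun (pathP S (m+1) ω) (Z m ω) :=
        le_antisymm (hsand ω).2 (by rw [← h1]; exact (hsand ω).1)
      rw [h4, h2]
      exact (hgs m ω).symm
  -- ===== the Markov/branching engine =====
  have hengine : ∀ (m : ℕ) (β : ℝ), 0 ≤ β →
      ∀ (h : (Fin (m+1) → ℝ → ℝ) → ENNReal), Measurable h → (∀ w, h w ≤ 1) →
      ∫⁻ ω, h (pathW S m ω) * ENNReal.ofReal (Real.exp (-(β * Z (m+1) ω))) ∂μ
        = ∫⁻ ω, h (pathW S m ω)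
          * ENNReal.ofReal (Real.exp (-(laplaceExpF Λ c β * Z m ω))) ∂μ := by
    intro m β hβ h hmeas hbd
    have h1 := (hcore m (hYZ m) h hmeas hbd β hβ).1
    have hae2 : ∀ᵐ ω ∂μ, Z (m+1) ω = rfun (pathP S (m+1) ω) (Z m ω) := by
      filter_upwards [hYZ (m+1), hYZ m] with ω ha hb
      rw [ha, hgs m ω, ← hb]
    calc ∫⁻ ω, h (pathW S m ω) * ENNReal.ofReal (Real.exp (-(β * Z (m+1) ω))) ∂μ
        = ∫⁻ ω, h (pathW S m ω)
            * ENNReal.ofReal (Real.exp (-(β * rfun (pathP S (m+1) ω) (Z m ω)))) ∂μ := by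
          refine lintegral_congr_ae ?_
          filter_upwards [hae2] with ω hω
          rw [hω]
      _ = ∫⁻ ω, h (pathW S m ω)
            * ENNReal.ofReal (Real.exp (-(Z m ω * laplaceExpF Λ c β))) ∂μ := h1
      _ = ∫⁻ ω, h (pathW S m ω)
            * ENNReal.ofReal (Real.exp (-(laplaceExpF Λ c β * Z m ω))) ∂μ := by
          exact lintegral_congr fun ω => by rw [mul_comm (Z m ω)]
  -- ===== marginal Laplace transforms =====
  have hD1 : ∀ n : ℕ, ∀ β : ℝ, 0 ≤ β →
      ∫⁻ ω, ENNReal.ofReal (Real.exp (-(β * Z n ω))) ∂μ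
        = ENNReal.ofReal (Real.exp (-((laplaceExpF Λ c)^[n] β * x))) := by
    intro n
    induction n with
    | zero =>
      intro β hβ
      have hcg : ∀ ω, ENNReal.ofReal (Real.exp (-(β * Z 0 ω)))
          = ENNReal.ofReal (Real.exp (-(β * x))) := fun ω => by rw [hZ0]
      rw [lintegral_congr hcg, lintegral_const, measure_univ, mul_one,
        Function.iterate_zero_apply, mul_comm β x]
    | succ n ih =>
      intro β hβ
      have heng := hengine n β hβ (fun _ => 1) measurable_const (fun _ => le_rfl)
      simp only [one_mul] at heng
      rw [heng, ih (laplaceExpF Λ c β) (hFnn β hβ), Function.iterate_succ_apply]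
  -- ===== upper bound for extinction =====
  have hAmeas : MeasurableSet {ω | Tendsto (fun n => Z n ω) atTop (nhds 0)} :=
    measurableSet_tendsto (nhds 0) hZmeas
  have hFatou : μ {ω | Tendsto (fun n => Z n ω) atTop (nhds 0)}
      ≤ ENNReal.ofReal (Real.exp (-(η * x))) := by
    set lam0 := η + 1 with hlam0
    have hl0 : η < lam0 := by rw [hlam0]; linarith
    have hl0' : 0 ≤ lam0 := by rw [hlam0]; linarith
    have hiter := iterate_tendsto_fixed hη0 hFmono hfixη hFlt hFcont hl0
    have hlim1 : Tendsto (fun n => ∫⁻ ω, ENNReal.ofReal (Real.exp (-(lam0 * Z n ω))) ∂μ)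
        atTop (nhds (ENNReal.ofReal (Real.exp (-(η * x))))) := by
      have hfn : (fun n => ∫⁻ ω, ENNReal.ofReal (Real.exp (-(lam0 * Z n ω))) ∂μ)
          = fun n => ENNReal.ofReal (Real.exp (-((laplaceExpF Λ c)^[n] lam0 * x))) :=
        funext fun n => hD1 n lam0 hl0'
      rw [hfn]
      have hcont2 : Continuous fun y : ℝ => ENNReal.ofReal (Real.exp (-(y * x))) :=
        ENNReal.continuous_ofReal.comp
          (Real.continuous_exp.comp (continuous_id.mul continuous_const).neg)
      exact (hcont2.tendsto _).comp hiter
    calc μ {ω | Tendsto (fun n => Z n ω) atTop (nhds 0)}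
        = ∫⁻ ω, {ω | Tendsto (fun n => Z n ω) atTop (nhds 0)}.indicator
            (fun _ => (1:ENNReal)) ω ∂μ := (lintegral_indicator_one hAmeas).symm
      _ ≤ ∫⁻ ω, Filter.liminf
            (fun n => ENNReal.ofReal (Real.exp (-(lam0 * Z n ω)))) atTop ∂μ := by
          refine lintegral_mono fun ω => ?_
          by_cases hω : ω ∈ {ω | Tendsto (fun n => Z n ω) atTop (nhds 0)}
          · rw [Set.indicator_of_mem hω]
            have htd : Tendsto (fun n => ENNReal.ofReal (Real.exp (-(lam0 * Z n ω))))
                atTop (nhds 1) := by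
              have hcont3 : Continuous fun y : ℝ => ENNReal.ofReal (Real.exp (-(lam0 * y))) :=
                ENNReal.continuous_ofReal.comp
                  (Real.continuous_exp.comp (continuous_const.mul continuous_id).neg)
              have h7 := (hcont3.tendsto 0).comp hω
              simpa [Function.comp_def] using h7
            rw [htd.liminf_eq]
          · rw [Set.indicator_of_notMem hω]; exact zero_le
      _ ≤ Filter.liminf (fun n => ∫⁻ ω, ENNReal.ofReal (Real.exp (-(lam0 * Z n ω))) ∂μ) atTop :=
          lintegral_liminf_le fun n => ENNReal.measurable_ofReal.comp
            (Real.measurable_exp.comp (((hZmeas n).const_mul lam0).neg))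
      _ = ENNReal.ofReal (Real.exp (-(η * x))) := hlim1.liminf_eq
  -- ===== total-mass Laplace transform =====
  have hltail : ∀ lam : ℝ, 0 < lam → ∀ n : ℕ,
      ∫⁻ ω, ENNReal.ofReal (Real.exp (-(lam * ∑ i ∈ Finset.range (n+1), Z i ω))) ∂μ
        = ENNReal.ofReal
            (Real.exp (-((fun y => lam + laplaceExpF Λ c y)^[n] lam * x))) := by
    intro lam hlam n
    have huu : ∀ k, lam ≤ (fun y => lam + laplaceExpF Λ c y)^[k] lam := by
      intro k
      induction k with
      | zero => simp
      | succ k ih =>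
        rw [Function.iterate_succ_apply']
        have h7 := hFnn _ (hlam.le.trans ih)
        show lam ≤ lam + laplaceExpF Λ c _
        linarith
    have hclaim : ∀ k, k ≤ n →
        ∫⁻ ω, ENNReal.ofReal (Real.exp (-(lam * ∑ i ∈ Finset.range (n+1), Z i ω))) ∂μ
          = ∫⁻ ω, ENNReal.ofReal (Real.exp (-(lam * ∑ i ∈ Finset.range (n-k), Z i ω)))
              * ENNReal.ofReal
                (Real.exp (-((fun y => lam + laplaceExpF Λ c y)^[k] lam * Z (n-k) ω))) ∂μ := by
      intro k
      induction k with
      | zero =>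
        intro _
        refine lintegral_congr fun ω => ?_
        rw [← ENNReal.ofReal_mul (Real.exp_pos _).le, ← Real.exp_add]
        congr 1
        rw [Nat.sub_zero, Function.iterate_zero_apply, Finset.sum_range_succ]
        ring
      | succ k ihk =>
        intro hkn
        have hkn' : k ≤ n := (Nat.le_succ k).trans hkn
        rw [ihk hkn']
        obtain ⟨m, hm⟩ : ∃ m, n - k = m + 1 := ⟨n - (k+1), by omega⟩
        have hm2 : n - (k+1) = m := by omega
        rw [hm, hm2]
        set uk := (fun y => lam + laplaceExpF Λ c y)^[k] lam with huk
        set hfun : (Fin (m+1) → ℝ → ℝ) → ENNReal := fun w =>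
          ENNReal.ofReal (Real.exp (-(lam * ∑ i : Fin (m+1),
            max (gseq x (i:ℕ) (fun j : Fin ((i:ℕ)+1) => w (Fin.castLE i.isLt j))) 0)))
          with hhf
        have hhmeas : Measurable hfun := by
          refine ENNReal.measurable_ofReal.comp (Real.measurable_exp.comp ?_)
          refine Measurable.neg (Measurable.const_mul ?_ lam)
          refine Finset.measurable_sum _ (fun i _ => ?_)
          exact ((measurable_gseq x (i:ℕ)).comp
            (measurable_pi_lambda _ (fun j => measurable_pi_apply _))).max measurable_const
        have hhbd : ∀ w, hfun w ≤ 1 := by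
          intro w
          refine ENNReal.ofReal_le_one.2 (Real.exp_le_one_iff.2 ?_)
          have hsum : 0 ≤ ∑ i : Fin (m+1),
              max (gseq x (i:ℕ) (fun j : Fin ((i:ℕ)+1) => w (Fin.castLE i.isLt j))) 0 :=
            Finset.sum_nonneg fun i _ => le_max_right _ _
          nlinarith [hlam.le]
        have hcongr : ∀ᵐ ω ∂μ, hfun (pathW S m ω)
            = ENNReal.ofReal (Real.exp (-(lam * ∑ i ∈ Finset.range (m+1), Z i ω))) := by
          have hall : ∀ᵐ ω ∂μ, ∀ i : Fin (m+1), Z (i:ℕ) ω = gseq x (i:ℕ) (pathW S (i:ℕ) ω) :=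
            (MeasureTheory.ae_all_iff).2 fun i => hYZ (i:ℕ)
          filter_upwards [hall] with ω hω
          show ENNReal.ofReal (Real.exp (-(lam * ∑ i : Fin (m+1),
              max (gseq x (i:ℕ)
                (fun j : Fin ((i:ℕ)+1) => pathW S m ω (Fin.castLE i.isLt j))) 0)))
            = ENNReal.ofReal (Real.exp (-(lam * ∑ i ∈ Finset.range (m+1), Z i ω)))
          have hsum : (∑ i : Fin (m+1),
              max (gseq x (i:ℕ)
                (fun j : Fin ((i:ℕ)+1) => pathW S m ω (Fin.castLE i.isLt j))) 0)
              = ∑ i ∈ Finset.range (m+1), Z i ω := by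
            rw [← Fin.sum_univ_eq_sum_range (fun i => Z i ω) (m+1)]
            refine Finset.sum_congr rfl fun i _ => ?_
            have h8 : (fun j : Fin ((i:ℕ)+1) => pathW S m ω (Fin.castLE i.isLt j))
                = pathW S (i:ℕ) ω := rfl
            rw [h8, ← hω i, max_eq_left (hZnn (i:ℕ) ω)]
          rw [hsum]
        have heng := hengine m uk (hlam.le.trans (huu k)) hfun hhmeas hhbd
        calc ∫⁻ ω, ENNReal.ofReal (Real.exp (-(lam * ∑ i ∈ Finset.range (m+1), Z i ω)))
              * ENNReal.ofReal (Real.exp (-(uk * Z (m+1) ω))) ∂μ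
            = ∫⁻ ω, hfun (pathW S m ω) * ENNReal.ofReal (Real.exp (-(uk * Z (m+1) ω))) ∂μ := by
              refine lintegral_congr_ae ?_
              filter_upwards [hcongr] with ω hω
              rw [hω]
          _ = ∫⁻ ω, hfun (pathW S m ω)
              * ENNReal.ofReal (Real.exp (-(laplaceExpF Λ c uk * Z m ω))) ∂μ := heng
          _ = ∫⁻ ω, ENNReal.ofReal (Real.exp (-(lam * ∑ i ∈ Finset.range (m+1), Z i ω)))
              * ENNReal.ofReal (Real.exp (-(laplaceExpF Λ c uk * Z m ω))) ∂μ := by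
              refine lintegral_congr_ae ?_
              filter_upwards [hcongr] with ω hω
              rw [hω]
          _ = ∫⁻ ω, ENNReal.ofReal (Real.exp (-(lam * ∑ i ∈ Finset.range m, Z i ω)))
              * ENNReal.ofReal
                (Real.exp (-((fun y => lam + laplaceExpF Λ c y)^[k+1] lam * Z m ω))) ∂μ := by
              refine lintegral_congr fun ω => ?_
              rw [← ENNReal.ofReal_mul (Real.exp_pos _).le,
                ← ENNReal.ofReal_mul (Real.exp_pos _).le,
                ← Real.exp_add, ← Real.exp_add]
              congr 1
              rw [Real.exp_eq_exp, Function.iterate_succ_apply', Finset.sum_range_succ,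
                ← huk]
              show -(lam * (∑ i ∈ Finset.range m, Z i ω + Z m ω))
                  + -(laplaceExpF Λ c uk * Z m ω)
                = -(lam * ∑ i ∈ Finset.range m, Z i ω)
                  + -((lam + laplaceExpF Λ c uk) * Z m ω)
              ring
    have hfin := hclaim n le_rfl
    rw [hfin, Nat.sub_self]
    have hcg : ∀ ω, ENNReal.ofReal (Real.exp (-(lam * ∑ i ∈ Finset.range 0, Z i ω)))
        * ENNReal.ofReal (Real.exp (-((fun y => lam + laplaceExpF Λ c y)^[n] lam * Z 0 ω)))
        = ENNReal.ofReal (Real.exp (-((fun y => lam + laplaceExpF Λ c y)^[n] lam * x))) := by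
      intro ω
      rw [Finset.range_zero, Finset.sum_empty, mul_zero, neg_zero, Real.exp_zero,
        ENNReal.ofReal_one, one_mul, hZ0]
    rw [lintegral_congr hcg, lintegral_const, measure_univ, mul_one]
  -- ===== v(λ) facts =====
  have hustar : ∀ lam : ℝ, 0 < lam → ∃ u : ℝ, 0 < u ∧ lam + laplaceExpF Λ c u = u := by
    intro lam hlam
    set aa := max η lam with haa
    have haa0 : 0 < aa := lt_of_lt_of_le hlam (le_max_right _ _)
    set K := max (2*(lam + cb) + 1) aa with hKdef
    have haaK : aa ≤ K := le_max_right _ _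
    have hK1 : 2*(lam+cb) + 1 ≤ K := le_max_left _ _
    have hK0 : 0 < K := haa0.trans_le haaK
    have hGa : aa - laplaceExpF Λ c aa ≤ lam := by
      rcases max_cases η lam with ⟨h1, h2⟩ | ⟨h1, h2⟩
      · rw [haa, h1, hfixη]; linarith
      · rw [haa, h1]
        have := hFnn lam hlam.le
        linarith
    have hGK : lam ≤ K - laplaceExpF Λ c K := by
      have h1 := hlinb K hK0.le
      nlinarith
    have hcontOn : ContinuousOn (fun u => u - laplaceExpF Λ c u) (Set.Icc aa K) := by
      intro u hu
      exact (continuousAt_id.sub (hFcont u (haa0.trans_le hu.1))).continuousWithinAt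
    have hivt := intermediate_value_Icc haaK hcontOn
    have hmem : lam ∈ Set.Icc (aa - laplaceExpF Λ c aa) (K - laplaceExpF Λ c K) := ⟨hGa, hGK⟩
    obtain ⟨u, hu, hGu⟩ := hivt hmem
    refine ⟨u, haa0.trans_le hu.1, ?_⟩
    have : u - laplaceExpF Λ c u = lam := hGu
    linarith
  set vfun : ℝ → ℝ := fun lam => ⨆ n, (fun y => lam + laplaceExpF Λ c y)^[n] lam
    with hvfun
  have hv : ∀ lam : ℝ, 0 < lam → lam ≤ vfun lam
      ∧ vfun lam = lam + laplaceExpF Λ c (vfun lam)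
      ∧ Tendsto (fun n => (fun y => lam + laplaceExpF Λ c y)^[n] lam) atTop
          (nhds (vfun lam)) := by
    intro lam hlam
    obtain ⟨u, hu0, hufix⟩ := hustar lam hlam
    have h := iterate_affine_tendsto hlam hFmono (fun y hy => hFnn y hy) hFcont hufix hu0.le
    exact ⟨h.1, h.2.2.1, h.2.2.2.1⟩
  have hvgt : ∀ lam : ℝ, 0 < lam → η < vfun lam := by
    intro lam hlam
    obtain ⟨h1, h2, _⟩ := hv lam hlam
    by_contra hcon
    push_neg at hcon
    have h3 : vfun lam ≤ laplaceExpF Λ c (vfun lam) := hFge _ (hlam.le.trans h1) hcon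
    linarith
  have hvmono : ∀ lam lam' : ℝ, 0 < lam → lam ≤ lam' → vfun lam ≤ vfun lam' := by
    intro lam lam' h0 hle
    have h0' : 0 < lam' := h0.trans_le hle
    obtain ⟨u', hu0', hufix'⟩ := hustar lam' h0'
    have h' := iterate_affine_tendsto h0' hFmono (fun y hy => hFnn y hy) hFcont hufix' hu0'.le
    have hbdd : BddAbove (Set.range fun n => (fun y => lam' + laplaceExpF Λ c y)^[n] lam') :=
      ⟨u', by rintro _ ⟨n, rfl⟩; exact h'.2.2.2.2 n⟩
    refine ciSup_le fun n => ?_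
    exact (iterate_affine_mono_in_lam hFmono (fun y hy => hFnn y hy) h0 hle n).trans
      (le_ciSup hbdd n)
  have hvlim : Tendsto (fun j : ℕ => vfun (1/(j+1))) atTop (nhds η) := by
    have hpos : ∀ j : ℕ, (0:ℝ) < 1/(j+1) := fun j => by positivity
    have hanti : Antitone fun j : ℕ => vfun (1/(j+1)) := by
      intro i j hij
      refine hvmono _ _ (hpos j) ?_
      apply one_div_le_one_div_of_le (by positivity)
      exact_mod_cast by exact_mod_cast Nat.succ_le_succ hij
    have hbdd : BddBelow (Set.range fun j : ℕ => vfun (1/(j+1))) :=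
      ⟨η, by rintro _ ⟨j, rfl⟩; exact (hvgt _ (hpos j)).le⟩
    have hlim := tendsto_atTop_ciInf hanti hbdd
    have hLvη : η ≤ ⨅ j : ℕ, vfun (1/(j+1)) := le_ciInf fun j => (hvgt _ (hpos j)).le
    rcases eq_or_lt_of_le hLvη with heq | hlt
    · rwa [← heq] at hlim
    · exfalso
      have hLpos : (0:ℝ) < ⨅ j : ℕ, vfun (1/(j+1)) := lt_of_le_of_lt hη0 hlt
      have h1 : Tendsto (fun j : ℕ => (1:ℝ)/(j+1)) atTop (nhds 0) :=
        tendsto_one_div_add_atTop_nhds_zero_nat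
      have h2 : Tendsto (fun j : ℕ => laplaceExpF Λ c (vfun (1/(j+1)))) atTop
          (nhds (laplaceExpF Λ c (⨅ j : ℕ, vfun (1/(j+1))))) :=
        ((hFcont _ hLpos).tendsto).comp hlim
      have h3 := h1.add h2
      have h4 : (fun j : ℕ => vfun (1/(j+1)))
          = fun j : ℕ => 1/(j+1) + laplaceExpF Λ c (vfun (1/(j+1))) :=
        funext fun j => (hv _ (hpos j)).2.1
      have hlim2 : Tendsto (fun j : ℕ => 1/(j+1) + laplaceExpF Λ c (vfun (1/(j+1))))
          atTop (nhds (⨅ j : ℕ, vfun (1/(j+1)))) := by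
        rw [← h4]; exact hlim
      have h5 : (⨅ j : ℕ, vfun (1/(j+1)))
          = 0 + laplaceExpF Λ c (⨅ j : ℕ, vfun (1/(j+1))) := tendsto_nhds_unique hlim2 h3
      have h6 : laplaceExpF Λ c (⨅ j : ℕ, vfun (1/(j+1))) = ⨅ j : ℕ, vfun (1/(j+1)) := by
        linarith
      exact absurd (hubη _ hLpos.le h6) (not_le.2 hlt)
  -- ===== measure of summable set =====
  have hSmblMeas : MeasurableSet {ω | Summable (fun n => Z n ω)} := by
    have hset : {ω | Summable (fun n => Z n ω)}
        = ⋃ M : ℕ, ⋂ n : ℕ, {ω | ∑ i ∈ Finset.range n, Z i ω ≤ (M:ℝ)} := by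
      ext ω
      simp only [Set.mem_setOf_eq, Set.mem_iUnion, Set.mem_iInter]
      constructor
      · intro hs
        refine ⟨Nat.ceil (∑' i, Z i ω), fun n => ?_⟩
        exact (Summable.sum_le_tsum (Finset.range n) (fun i _ => hZnn i ω) hs).trans (Nat.le_ceil _)
      · rintro ⟨M, hM⟩
        exact summable_of_sum_range_le (fun i => hZnn i ω) hM
    rw [hset]
    refine MeasurableSet.iUnion fun M => MeasurableSet.iInter fun n => ?_
    exact measurableSet_le (Finset.measurable_sum _ (fun i _ => hZmeas i)) measurable_const
  have hSlim : ∀ lam : ℝ, 0 < lam →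
      ∫⁻ ω, (⨅ n, ENNReal.ofReal
          (Real.exp (-(lam * ∑ i ∈ Finset.range (n+1), Z i ω)))) ∂μ
        = ENNReal.ofReal (Real.exp (-(vfun lam * x))) := by
    intro lam hlam
    have hmeasn : ∀ n : ℕ, Measurable fun ω =>
        ENNReal.ofReal (Real.exp (-(lam * ∑ i ∈ Finset.range (n+1), Z i ω))) := fun n =>
      ENNReal.measurable_ofReal.comp (Real.measurable_exp.comp
        (((Finset.measurable_sum _ (fun i _ => hZmeas i)).const_mul lam).neg))
    have hantin : ∀ ω, Antitone fun n : ℕ =>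
        ENNReal.ofReal (Real.exp (-(lam * ∑ i ∈ Finset.range (n+1), Z i ω))) := by
      intro ω i j hij
      refine ENNReal.ofReal_le_ofReal (Real.exp_le_exp.2 ?_)
      have hs : ∑ i' ∈ Finset.range (i+1), Z i' ω ≤ ∑ i' ∈ Finset.range (j+1), Z i' ω :=
        Finset.sum_le_sum_of_subset_of_nonneg
          (Finset.range_subset_range.2 (by omega)) (fun k _ _ => hZnn k ω)
      nlinarith [hlam.le]
    have h1 : Tendsto (fun n => ∫⁻ ω, ENNReal.ofReal
        (Real.exp (-(lam * ∑ i ∈ Finset.range (n+1), Z i ω))) ∂μ) atTop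
        (nhds (∫⁻ ω, (⨅ n, ENNReal.ofReal
          (Real.exp (-(lam * ∑ i ∈ Finset.range (n+1), Z i ω)))) ∂μ)) := by
      refine tendsto_lintegral_filter_of_dominated_convergence (fun _ => 1)
        (Filter.Eventually.of_forall hmeasn)
        (Filter.Eventually.of_forall fun n => Filter.Eventually.of_forall fun ω => ?_) ?_
        (Filter.Eventually.of_forall fun ω => ?_)
      · refine ENNReal.ofReal_le_one.2 (Real.exp_le_one_iff.2 ?_)
        have hsum0 : 0 ≤ ∑ i ∈ Finset.range (n+1), Z i ω :=
          Finset.sum_nonneg fun k _ => hZnn k ω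
        nlinarith [hlam.le]
      · simp
      · exact tendsto_atTop_iInf (hantin ω)
    have h2 : Tendsto (fun n => ∫⁻ ω, ENNReal.ofReal
        (Real.exp (-(lam * ∑ i ∈ Finset.range (n+1), Z i ω))) ∂μ) atTop
        (nhds (ENNReal.ofReal (Real.exp (-(vfun lam * x))))) := by
      rw [show (fun n => ∫⁻ ω, ENNReal.ofReal
          (Real.exp (-(lam * ∑ i ∈ Finset.range (n+1), Z i ω))) ∂μ)
        = fun n => ENNReal.ofReal
          (Real.exp (-((fun y => lam + laplaceExpF Λ c y)^[n] lam * x)))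
        from funext fun n => hltail lam hlam n]
      have hcont2 : Continuous fun y : ℝ => ENNReal.ofReal (Real.exp (-(y * x))) :=
        ENNReal.continuous_ofReal.comp
          (Real.continuous_exp.comp (continuous_id.mul continuous_const).neg)
      exact (hcont2.tendsto _).comp (hv lam hlam).2.2
    exact tendsto_nhds_unique h1 h2
  have hSmbl : μ {ω | Summable (fun n => Z n ω)} = ENNReal.ofReal (Real.exp (-(η * x))) := by
    have hpos : ∀ j : ℕ, (0:ℝ) < 1/(j+1) := fun j => by positivity
    set ψ : ℕ → Ω → ENNReal := fun j ω =>
      ⨅ n, ENNReal.ofReal (Real.exp (-((1/(j+1)) * ∑ i ∈ Finset.range (n+1), Z i ω)))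
      with hψ
    have hψmeas : ∀ j, Measurable (ψ j) := fun j =>
      Measurable.iInf fun n => ENNReal.measurable_ofReal.comp (Real.measurable_exp.comp
        (((Finset.measurable_sum _ (fun i _ => hZmeas i)).const_mul _).neg))
    have hψmono : ∀ ω, Monotone fun j => ψ j ω := by
      intro ω i j hij
      refine iInf_mono fun n => ?_
      refine ENNReal.ofReal_le_ofReal (Real.exp_le_exp.2 ?_)
      have hsum0 : 0 ≤ ∑ i' ∈ Finset.range (n+1), Z i' ω :=
        Finset.sum_nonneg fun k _ => hZnn k ω
      have hd : (1:ℝ)/(j+1) ≤ 1/(i+1) := by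
        apply one_div_le_one_div_of_le (by positivity)
        exact_mod_cast Nat.succ_le_succ hij
      nlinarith [hpos j]
    have hψval : ∀ (j : ℕ) ω, Tendsto (fun n => ENNReal.ofReal
        (Real.exp (-((1/(j+1):ℝ) * ∑ i ∈ Finset.range (n+1), Z i ω)))) atTop
        (nhds (ψ j ω)) := by
      intro j ω
      refine tendsto_atTop_iInf ?_
      intro a b hab
      refine ENNReal.ofReal_le_ofReal (Real.exp_le_exp.2 ?_)
      have hs : ∑ i' ∈ Finset.range (a+1), Z i' ω ≤ ∑ i' ∈ Finset.range (b+1), Z i' ω :=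
        Finset.sum_le_sum_of_subset_of_nonneg
          (Finset.range_subset_range.2 (by omega)) (fun k _ _ => hZnn k ω)
      nlinarith [hpos j]
    have hψsum : ∀ (j : ℕ) ω, Summable (fun i => Z i ω) →
        ψ j ω = ENNReal.ofReal (Real.exp (-((1/(j+1):ℝ) * ∑' i, Z i ω))) := by
      intro j ω hs
      refine tendsto_nhds_unique (hψval j ω) ?_
      have hps : Tendsto (fun n => ∑ i ∈ Finset.range (n+1), Z i ω) atTop
          (nhds (∑' i, Z i ω)) :=
        (hs.hasSum.tendsto_sum_nat).comp (tendsto_add_atTop_nat 1)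
      have hcont2 : Continuous fun y : ℝ =>
          ENNReal.ofReal (Real.exp (-((1/(j+1):ℝ) * y))) :=
        ENNReal.continuous_ofReal.comp
          (Real.continuous_exp.comp (continuous_const.mul continuous_id).neg)
      exact (hcont2.tendsto _).comp hps
    have hψnot : ∀ (j : ℕ) ω, ¬ Summable (fun i => Z i ω) → ψ j ω = 0 := by
      intro j ω hs
      refine tendsto_nhds_unique (hψval j ω) ?_
      have hdiv : Tendsto (fun n => ∑ i ∈ Finset.range n, Z i ω) atTop atTop :=
        (not_summable_iff_tendsto_nat_atTop_of_nonneg (fun i => hZnn i ω)).1 hs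
      have hdiv1 : Tendsto (fun n => ∑ i ∈ Finset.range (n+1), Z i ω) atTop atTop :=
        hdiv.comp (tendsto_add_atTop_nat 1)
      have h3 : Tendsto (fun n => -((1/(j+1):ℝ)
          * ∑ i ∈ Finset.range (n+1), Z i ω)) atTop atBot :=
        tendsto_neg_atTop_atBot.comp (hdiv1.const_mul_atTop (hpos j))
      have h4 := Real.tendsto_exp_atBot.comp h3
      have h5 := (ENNReal.continuous_ofReal.tendsto 0).comp h4
      simpa [Function.comp_def] using h5
    have hψlim : ∀ ω, Tendsto (fun j => ψ j ω) atTop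
        (nhds ({ω | Summable (fun n => Z n ω)}.indicator (fun _ => (1:ENNReal)) ω)) := by
      intro ω
      by_cases hs : Summable (fun i => Z i ω)
      · rw [Set.indicator_of_mem (show ω ∈ {ω | Summable fun n => Z n ω} from hs)]
        have hrw : (fun j : ℕ => ψ j ω)
            = fun j : ℕ => ENNReal.ofReal (Real.exp (-((1/(j+1):ℝ) * ∑' i, Z i ω))) :=
          funext fun j => hψsum j ω hs
        rw [hrw]
        have h1 : Tendsto (fun j : ℕ => (1:ℝ)/(j+1)) atTop (nhds 0) :=
          tendsto_one_div_add_atTop_nhds_zero_nat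
        have hcont2 : Continuous fun y : ℝ =>
            ENNReal.ofReal (Real.exp (-(y * ∑' i, Z i ω))) :=
          ENNReal.continuous_ofReal.comp
            (Real.continuous_exp.comp (continuous_id.mul continuous_const).neg)
        have h6 := (hcont2.tendsto 0).comp h1
        simpa [Function.comp_def] using h6
      · rw [Set.indicator_of_notMem
          (show ω ∉ {ω | Summable fun n => Z n ω} from hs)]
        have hrw : (fun j : ℕ => ψ j ω) = fun _ => (0:ENNReal) :=
          funext fun j => hψnot j ω hs
        rw [hrw]
        exact tendsto_const_nhds
    have hIL := lintegral_tendsto_of_tendsto_of_monotone (μ := μ)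
      (fun j => (hψmeas j).aemeasurable)
      (Filter.Eventually.of_forall hψmono) (Filter.Eventually.of_forall hψlim)
    have hIl2 : ∫⁻ ω, {ω | Summable (fun n => Z n ω)}.indicator (fun _ => (1:ENNReal)) ω ∂μ
        = μ {ω | Summable (fun n => Z n ω)} := lintegral_indicator_one hSmblMeas
    have hval : ∀ j : ℕ, ∫⁻ ω, ψ j ω ∂μ
        = ENNReal.ofReal (Real.exp (-(vfun (1/(j+1)) * x))) :=
      fun j => hSlim _ (hpos j)
    have hR2 : Tendsto (fun j : ℕ => ∫⁻ ω, ψ j ω ∂μ) atTop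
        (nhds (ENNReal.ofReal (Real.exp (-(η * x))))) := by
      rw [funext hval]
      have hcont2 : Continuous fun y : ℝ => ENNReal.ofReal (Real.exp (-(y * x))) :=
        ENNReal.continuous_ofReal.comp
          (Real.continuous_exp.comp (continuous_id.mul continuous_const).neg)
      exact (hcont2.tendsto _).comp hvlim
    rw [← hIl2]
    exact tendsto_nhds_unique hIL hR2
  -- ===== assembly =====
  have hsub : {ω | Summable (fun n => Z n ω)}
      ⊆ {ω | Tendsto (fun n => Z n ω) atTop (nhds 0)} :=
    fun ω hω => hω.tendsto_atTop_zero
  have hmain : μ {ω | Tendsto (fun n => Z n ω) atTop (nhds 0)}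
      = ENNReal.ofReal (Real.exp (-(η * x))) := by
    refine le_antisymm hFatou ?_
    rw [← hSmbl]
    exact measure_mono hsub
  refine ⟨hmain, ?_⟩
  have hdiff : μ ({ω | Tendsto (fun n => Z n ω) atTop (nhds 0)}
      \ {ω | Summable (fun n => Z n ω)}) = 0 := by
    rw [measure_diff hsub hSmblMeas.nullMeasurableSet (measure_ne_top μ _), hmain, hSmbl,
      tsub_self]
  rw [MeasureTheory.ae_iff]
  refine measure_mono_null ?_ hdiff
  intro ω hω
  simp only [Set.mem_setOf_eq] at hω
  have h1 : Tendsto (fun n => Z n ω) atTop (nhds 0) ∧ ¬ Summable (fun n => Z n ω) := by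
    by_cases hs : Summable (fun n => Z n ω)
    · exact absurd (iff_of_true hs hs.tendsto_atTop_zero) hω
    · by_cases ht : Tendsto (fun n => Z n ω) atTop (nhds 0)
      · exact ⟨ht, hs⟩
      · exact absurd (iff_of_false hs ht) hω
  exact ⟨h1.1, h1.2⟩
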